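/- Let (F_s)_{s≥0} be a filtration on a probability space, let I be a countable index set, and for each i ∈ I let (W^i_s)_{s≥0} be an (F_s)-adapted ℤ-valued process with right-continuous sample paths and W^i_0 = x_i almost surely, where the x_i are integers with Σ_{i∈I} e^{θ x_i} < ∞. Let θ > 0 and α > 0 satisfy 2(cosh θ − 1) ≤ αθ, and assume that for each i the process exp(θ W^i_s − 2(cosh θ − 1)s) is an (F_s)-martingale. Let T be an (F_s)-stopping time, let m ≥ 0, and let R be a random variable such that R ≥ α T + m almost surely on the event {T < ∞}. Then E[ Σ_{i∈I} exp(−θ(R − W^i_T)) · 1_{T<∞} ] ≤ e^{−θm} Σ_{i∈I} e^{θ x_i}. -/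

import Mathlib

open MeasureTheory Filter Topology
open scoped NNReal ENNReal

section Aux

lemma aux_tsum_liminf {I : Type*} [Countable I] (f : ℕ → I → ℝ≥0∞) :
    ∑' i, Filter.liminf (fun n => f n i) Filter.atTop ≤
      Filter.liminf (fun n => ∑' i, f n i) Filter.atTop := by
  letI : MeasurableSpace I := ⊤
  haveI : MeasurableSingletonClass I := ⟨fun _ => trivial⟩
  calc ∑' i, Filter.liminf (fun n => f n i) Filter.atTop
      = ∫⁻ i, Filter.liminf (fun n => f n i) Filter.atTop ∂Measure.count :=
        (lintegral_count _).symm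
    _ ≤ Filter.liminf (fun n => ∫⁻ i, f n i ∂Measure.count) Filter.atTop :=
        lintegral_liminf_le (fun _ => measurable_from_top)
    _ = _ := by simp_rw [lintegral_count]

variable {Ω : Type*} {mΩ : MeasurableSpace Ω}

/-- the dyadic grid point `k / 2^n` in `ℝ≥0`. -/
noncomputable def qGrid (n k : ℕ) : ℝ≥0 := (k : ℝ≥0) / 2 ^ n

lemma qGrid_mono (n : ℕ) : Monotone (qGrid n) := fun k l hkl => by
  unfold qGrid
  exact div_le_div_of_nonneg_right (by exact_mod_cast hkl) (by positivity)

lemma qGrid_coe (n k : ℕ) : ((qGrid n k : ℝ≥0) : ℝ) = (k : ℝ) / 2 ^ n := by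
  simp [qGrid]

/-- the filtration along the dyadic grid. -/
noncomputable def gridFilt (𝓕 : Filtration ℝ≥0 mΩ) (n : ℕ) : Filtration ℕ mΩ where
  seq := fun k => 𝓕 (qGrid n k)
  mono' := fun _ _ hkl => 𝓕.mono (qGrid_mono n hkl)
  le' := fun _ => 𝓕.le _

/-- dyadic approximation of the stopping time `T`, capped at time `n`. -/
noncomputable def tauN (T : Ω → ℝ≥0∞) (n : ℕ) (ω : Ω) : ℕ :=
  if T ω ≤ (n : ℝ≥0∞) then ⌈(T ω).toReal * 2 ^ n⌉₊ else n * 2 ^ n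

lemma tauN_le (T : Ω → ℝ≥0∞) (n : ℕ) (ω : Ω) : tauN T n ω ≤ n * 2 ^ n := by
  unfold tauN
  split_ifs with h
  · have ht : (T ω).toReal ≤ n := by
      refine ENNReal.toReal_le_of_le_ofReal (by positivity) ?_
      simpa [ENNReal.ofReal_natCast] using h
    calc ⌈(T ω).toReal * 2 ^ n⌉₊ ≤ ⌈(n : ℝ) * 2 ^ n⌉₊ := by gcongr
      _ = n * 2 ^ n := by
          rw [show ((n : ℝ) * 2 ^ n) = ((n * 2 ^ n : ℕ) : ℝ) by push_cast; ring]
          exact Nat.ceil_natCast _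
  · exact le_rfl

lemma tauN_le_iff {T : Ω → ℝ≥0∞} {n k : ℕ} (hk : k < n * 2 ^ n) (ω : Ω) :
    tauN T n ω ≤ k ↔ T ω ≤ ((qGrid n k : ℝ≥0) : ℝ≥0∞) := by
  have h2 : (0:ℝ) < 2 ^ n := by positivity
  have hqk : ((qGrid n k : ℝ≥0) : ℝ≥0∞) < (n : ℝ≥0∞) := by
    have h1 : qGrid n k < (n : ℝ≥0) := by
      rw [qGrid, div_lt_iff₀ (by positivity)]
      exact_mod_cast hk
    calc ((qGrid n k : ℝ≥0) : ℝ≥0∞) < ((n : ℝ≥0) : ℝ≥0∞) := ENNReal.coe_lt_coe.mpr h1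
      _ = (n : ℝ≥0∞) := by simp
  constructor
  · intro h
    unfold tauN at h
    split_ifs at h with hTn
    · have hfin : T ω ≠ ⊤ := ne_top_of_le_ne_top (by simp) hTn
      have := Nat.ceil_le.mp h
      have ht : (T ω).toReal ≤ (k : ℝ) / 2 ^ n := by
        rw [le_div_iff₀ h2]; exact this
      calc T ω = ENNReal.ofReal (T ω).toReal := (ENNReal.ofReal_toReal hfin).symm
        _ ≤ ENNReal.ofReal ((k : ℝ) / 2 ^ n) := ENNReal.ofReal_le_ofReal ht
        _ = ((qGrid n k : ℝ≥0) : ℝ≥0∞) := by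
            rw [← qGrid_coe, ENNReal.ofReal_coe_nnreal]
    · omega
  · intro h
    have hTn : T ω ≤ (n : ℝ≥0∞) := h.trans hqk.le
    have hfin : T ω ≠ ⊤ := ne_top_of_le_ne_top (by simp) hTn
    unfold tauN
    rw [if_pos hTn, Nat.ceil_le, ← le_div_iff₀ h2, ← qGrid_coe]
    have := ENNReal.toReal_mono (by simp) h
    simpa using this

lemma tauN_isStoppingTime (𝓕 : Filtration ℝ≥0 mΩ) {T : Ω → ℝ≥0∞}
    (hT : ∀ t : ℝ≥0, MeasurableSet[𝓕 t] {ω | T ω ≤ (t : ℝ≥0∞)}) (n : ℕ) :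
    IsStoppingTime (gridFilt 𝓕 n) (fun ω => WithTop.some (tauN T n ω)) := by
  intro k
  simp only [WithTop.coe_le_coe]
  by_cases hk : k < n * 2 ^ n
  · have : {ω | tauN T n ω ≤ k} = {ω | T ω ≤ ((qGrid n k : ℝ≥0) : ℝ≥0∞)} := by
      ext ω; exact tauN_le_iff hk ω
    rw [this]
    exact hT (qGrid n k)
  · have : {ω | tauN T n ω ≤ k} = Set.univ := by
      ext ω
      simp only [Set.mem_setOf_eq, Set.mem_univ, iff_true]
      exact (tauN_le T n ω).trans (by omega)
    rw [this]
    exact MeasurableSet.univ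

variable {ℙ : Measure Ω} [IsProbabilityMeasure ℙ]

section Key

variable (θ c : ℝ) (W : ℝ≥0 → Ω → ℤ) (T : Ω → ℝ≥0∞)

/-- the discrete exponential process along the grid. -/
noncomputable def gridProc (n k : ℕ) (ω : Ω) : ℝ :=
  Real.exp (θ * (W (qGrid n k) ω : ℝ) - c * ((qGrid n k : ℝ≥0) : ℝ))

/-- the stopped value of the grid process at the dyadic approximation of `T`. -/
noncomputable def gApprox (n : ℕ) (ω : Ω) : ℝ := gridProc θ c W (n := n) (tauN T n ω) ω

variable {θ c W T}

omit [IsProbabilityMeasure ℙ] in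
lemma gridProc_adapted {𝓕 : Filtration ℝ≥0 mΩ} (hadapt : Adapted 𝓕 W) (n : ℕ) :
    Adapted (gridFilt 𝓕 n) (gridProc θ c W (n := n)) := by
  intro k
  refine (Continuous.comp_stronglyMeasurable
    (g := fun z : ℤ => Real.exp (θ * (z : ℝ) - c * ((qGrid n k : ℝ≥0) : ℝ))) ?_ (hadapt (qGrid n k)).stronglyMeasurable).measurable
  exact Real.continuous_exp.comp (by continuity)

lemma gApprox_eq_stoppedValue (n : ℕ) :
    gApprox θ c W T n = stoppedValue (gridProc θ c W (n := n)) (fun ω => WithTop.some (tauN T n ω)) := rfl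

omit [IsProbabilityMeasure ℙ] in
lemma gApprox_measurable {𝓕 : Filtration ℝ≥0 mΩ} (hadapt : Adapted 𝓕 W)
    (hT : ∀ t : ℝ≥0, MeasurableSet[𝓕 t] {ω | T ω ≤ (t : ℝ≥0∞)}) (n : ℕ) :
    Measurable (gApprox θ c W T n) := by
  rw [gApprox_eq_stoppedValue]
  have hτ := tauN_isStoppingTime 𝓕 hT n
  exact (measurable_stoppedValue
    ((gridProc_adapted hadapt n).stronglyAdapted.isStronglyProgressive_of_discrete) hτ).mono
      (hτ.measurableSpace_le) le_rfl

omit [IsProbabilityMeasure ℙ] in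
lemma gridProc_martingale {𝓕 : Filtration ℝ≥0 mΩ}
    (hM : Martingale (fun (s : ℝ≥0) (ω : Ω) =>
      Real.exp (θ * (W s ω : ℝ) - c * (s : ℝ))) 𝓕 ℙ) (n : ℕ) :
    Martingale (gridProc θ c W (n := n)) (gridFilt 𝓕 n) ℙ :=
  ⟨fun k => hM.stronglyAdapted (qGrid n k), fun k l hkl => hM.2 (qGrid n k) (qGrid n l) (qGrid_mono n hkl)⟩

lemma gApprox_lintegral_le {𝓕 : Filtration ℝ≥0 mΩ} {x : ℤ}
    (hM : Martingale (fun (s : ℝ≥0) (ω : Ω) =>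
      Real.exp (θ * (W s ω : ℝ) - c * (s : ℝ))) 𝓕 ℙ)
    (h0 : ∀ᵐ ω ∂ℙ, W 0 ω = x)
    (hT : ∀ t : ℝ≥0, MeasurableSet[𝓕 t] {ω | T ω ≤ (t : ℝ≥0∞)}) (n : ℕ) :
    ∫⁻ ω, ENNReal.ofReal (gApprox θ c W T n ω) ∂ℙ ≤ ENNReal.ofReal (Real.exp (θ * (x : ℝ))) := by
  have hmart := gridProc_martingale (ℙ := ℙ) hM n
  have hτ := tauN_isStoppingTime 𝓕 hT n
  have hτle : ∀ ω, WithTop.some (tauN T n ω) ≤ ((n * 2 ^ n : ℕ) : ℕ∞) :=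
    fun ω => WithTop.coe_le_coe.mpr (tauN_le T n ω)
  have hint : Integrable (stoppedValue (gridProc θ c W (n := n)) (fun ω => WithTop.some (tauN T n ω))) ℙ :=
    hmart.submartingale.integrable_stoppedValue hτ hτle
  have hOS : ∫ ω, stoppedValue (gridProc θ c W (n := n)) (fun ω => WithTop.some (tauN T n ω)) ω ∂ℙ ≤
      ∫ ω, gridProc θ c W (n := n) 0 ω ∂ℙ := by
    have h := (hmart.neg.submartingale).expected_stoppedValue_mono
      (isStoppingTime_const (gridFilt 𝓕 n) 0) hτ (fun ω => WithTop.coe_le_coe.mpr (Nat.zero_le _)) hτle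
    have e1 : stoppedValue (-(gridProc θ c W (n := n))) (fun _ => WithTop.some (0:ℕ)) =
        fun ω => -(gridProc θ c W (n := n) 0 ω) := rfl
    have e2 : stoppedValue (-(gridProc θ c W (n := n))) (fun ω => WithTop.some (tauN T n ω)) =
        fun ω => -(stoppedValue (gridProc θ c W (n := n)) (fun ω => WithTop.some (tauN T n ω)) ω) := rfl
    rw [e1, e2, integral_neg, integral_neg, neg_le_neg_iff] at h
    exact h
  have h0int : ∫ ω, gridProc θ c W (n := n) 0 ω ∂ℙ = Real.exp (θ * (x : ℝ)) := by
    have hq0 : qGrid n 0 = 0 := by simp [qGrid]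
    have : ∀ᵐ ω ∂ℙ, gridProc θ c W (n := n) 0 ω = Real.exp (θ * (x : ℝ)) := by
      filter_upwards [h0] with ω hω
      simp [gridProc, hq0, hω]
    rw [integral_congr_ae this, integral_const, probReal_univ]
    simp
  rw [gApprox_eq_stoppedValue,
    ← ofReal_integral_eq_lintegral_ofReal hint
      (Filter.Eventually.of_forall fun ω => (Real.exp_pos _).le)]
  exact ENNReal.ofReal_le_ofReal (hOS.trans_eq h0int)

omit [IsProbabilityMeasure ℙ] in
lemma gApprox_tendsto {ω : Ω}
    (hrc : ∀ s : ℝ≥0, ContinuousWithinAt (fun u => W u ω) (Set.Ici s) s)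
    (hω : T ω < ⊤) :
    Tendsto (fun n => gApprox θ c W T n ω) atTop
      (𝓝 (Real.exp (θ * (W (T ω).toNNReal ω : ℝ) - c * (T ω).toReal))) := by
  set t0 : ℝ≥0 := (T ω).toNNReal with ht0def
  have hTeq : T ω = (t0 : ℝ≥0∞) := (ENNReal.coe_toNNReal hω.ne).symm
  have htR : ((t0 : ℝ≥0) : ℝ) = (T ω).toReal := rfl
  set t : ℝ := (t0 : ℝ) with htdef
  have htnn : 0 ≤ t := t0.coe_nonneg
  set s : ℕ → ℝ≥0 := fun n => qGrid n (tauN T n ω) with hsdef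
  have hev : ∀ᶠ (n : ℕ) in atTop, T ω ≤ ((n : ℕ) : ℝ≥0∞) := by
    filter_upwards [eventually_ge_atTop ⌈t⌉₊] with n hn
    rw [hTeq]
    calc (t0 : ℝ≥0∞) ≤ ((⌈t⌉₊ : ℝ≥0) : ℝ≥0∞) := by
          rw [ENNReal.coe_le_coe, ← NNReal.coe_le_coe]
          exact (Nat.le_ceil t).trans (by exact_mod_cast le_refl _)
      _ ≤ (n : ℝ≥0∞) := by exact_mod_cast Nat.cast_le.mpr hn
  have h2 : ∀ n : ℕ, (0:ℝ) < 2 ^ n := fun n => by positivity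
  have hbounds : ∀ᶠ n in atTop, t ≤ ((s n : ℝ≥0) : ℝ) ∧ ((s n : ℝ≥0) : ℝ) ≤ t + (1/2) ^ n := by
    filter_upwards [hev] with n hn
    have hτ : tauN T n ω = ⌈(T ω).toReal * 2 ^ n⌉₊ := if_pos hn
    have htT : (T ω).toReal = t := rfl
    rw [hsdef]
    simp only [hτ, qGrid_coe, htT]
    constructor
    · rw [le_div_iff₀ (h2 n)]
      exact Nat.le_ceil _
    · rw [div_le_iff₀ (h2 n)]
      have := (Nat.ceil_lt_add_one (by positivity : (0:ℝ) ≤ t * 2 ^ n)).le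
      calc (⌈t * 2 ^ n⌉₊ : ℝ) ≤ t * 2 ^ n + 1 := this
        _ = (t + (1/2) ^ n) * 2 ^ n := by
              rw [add_mul, div_pow, one_pow, div_mul_cancel₀ _ (h2 n).ne']
  have hlim : Tendsto (fun n => ((s n : ℝ≥0) : ℝ)) atTop (𝓝 t) := by
    have hupper : Tendsto (fun n : ℕ => t + (1/2 : ℝ) ^ n) atTop (𝓝 t) := by
      have := tendsto_pow_atTop_nhds_zero_of_lt_one (by norm_num : (0:ℝ) ≤ 1/2)
        (by norm_num : (1/2:ℝ) < 1)
      simpa using tendsto_const_nhds.add this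
    exact tendsto_of_tendsto_of_tendsto_of_le_of_le' tendsto_const_nhds hupper
      (hbounds.mono fun n h => h.1) (hbounds.mono fun n h => h.2)
  have hs : Tendsto s atTop (𝓝 t0) := by
    rw [← NNReal.tendsto_coe] at *
    exact hlim
  have hmem : ∀ᶠ n in atTop, s n ∈ Set.Ici t0 :=
    hbounds.mono fun n h => by
      simp only [Set.mem_Ici, ← NNReal.coe_le_coe]; exact h.1
  have hsW : Tendsto (fun n => W (s n) ω) atTop (𝓝 (W t0 ω)) :=
    (hrc t0).tendsto.comp (tendsto_nhdsWithin_iff.mpr ⟨hs, hmem⟩)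
  have hWev : ∀ᶠ n in atTop, W (s n) ω = W t0 ω := by
    have hnb : {W t0 ω} ∈ 𝓝 (W t0 ω) := (isOpen_discrete _).mem_nhds rfl
    exact hsW.eventually (eventually_of_mem hnb fun y hy => hy)
  have hmain : Tendsto (fun n => Real.exp (θ * (W t0 ω : ℝ) - c * ((s n : ℝ≥0) : ℝ))) atTop
      (𝓝 (Real.exp (θ * (W t0 ω : ℝ) - c * t))) :=
    (Real.continuous_exp.continuousAt.tendsto).comp
      (tendsto_const_nhds.sub (hlim.const_mul c))
  have hfin : Tendsto (fun n => gApprox θ c W T n ω) atTop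
      (𝓝 (Real.exp (θ * (W t0 ω : ℝ) - c * t))) := by
    refine hmain.congr' ?_
    filter_upwards [hWev] with n hn
    simp only [gApprox, gridProc, hsdef]
    rw [hn]
  simpa [htR] using hfin

end Key

end Aux
theorem stmt_6
    {Ω : Type*} {mΩ : MeasurableSpace Ω} {ℙ : Measure Ω} [IsProbabilityMeasure ℙ]
    (𝓕 : Filtration ℝ≥0 mΩ)
    {I : Type*} [Countable I]
    (θ α : ℝ) (hθ : 0 < θ) (hα : 0 < α)
    (hθα : 2 * (Real.cosh θ - 1) ≤ α * θ)
    (W : I → ℝ≥0 → Ω → ℤ)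
    (hadapt : ∀ i : I, Adapted 𝓕 (W i))
    (hrc : ∀ i : I, ∀ ω : Ω, ∀ s : ℝ≥0,
      ContinuousWithinAt (fun u => W i u ω) (Set.Ici s) s)
    (x : I → ℤ)
    (h0 : ∀ i : I, ∀ᵐ ω ∂ℙ, W i 0 ω = x i)
    (hφ : Summable (fun i => Real.exp (θ * (x i : ℝ))))
    (hM : ∀ i : I, Martingale
      (fun (s : ℝ≥0) (ω : Ω) =>
        Real.exp (θ * (W i s ω : ℝ) - 2 * (Real.cosh θ - 1) * (s : ℝ))) 𝓕 ℙ)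
    (T : Ω → ℝ≥0∞)
    (hT : ∀ t : ℝ≥0, MeasurableSet[𝓕 t] {ω | T ω ≤ (t : ℝ≥0∞)})
    (m : ℝ) (hm : 0 ≤ m)
    (R : Ω → ℝ)
    (hR : ∀ᵐ ω ∂ℙ, T ω < ⊤ → α * (T ω).toReal + m ≤ R ω) :
    ∫⁻ ω in {ω | T ω < ⊤},
        ∑' i : I,
          ENNReal.ofReal
            (Real.exp (-θ * (R ω - (W i (T ω).toNNReal ω : ℝ)))) ∂ℙ ≤
      ENNReal.ofReal
        (Real.exp (-θ * m) * ∑' i : I, Real.exp (θ * (x i : ℝ))) := by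
  set c : ℝ := 2 * (Real.cosh θ - 1) with hcdef
  have hc : 0 ≤ c := by
    have := Real.one_le_cosh θ
    simp only [hcdef]; linarith
  set S : Set Ω := {ω | T ω < ⊤} with hSdef
  have hSmeas : MeasurableSet S := by
    have : S = ⋃ n : ℕ, {ω | T ω ≤ ((n : ℝ≥0) : ℝ≥0∞)} := by
      ext ω
      simp only [hSdef, Set.mem_setOf_eq, Set.mem_iUnion]
      constructor
      · intro h
        obtain ⟨n, hn⟩ := ENNReal.exists_nat_gt h.ne
        exact ⟨n, by exact_mod_cast hn.le⟩
      · rintro ⟨n, hn⟩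
        exact lt_of_le_of_lt hn (by exact_mod_cast ENNReal.coe_lt_top)
    rw [this]
    exact MeasurableSet.iUnion fun n => 𝓕.le _ _ (hT _)
  set F : ℕ → Ω → ℝ≥0∞ := fun n ω => ∑' i, ENNReal.ofReal (gApprox θ c (W i) T n ω) with hFdef
  have hFmeas : ∀ n, Measurable (F n) := fun n =>
    Measurable.ennreal_tsum fun i => (gApprox_measurable (hadapt i) hT n).ennreal_ofReal
  -- pointwise a.e. bound on the set S
  have key_ae : ∀ᵐ ω ∂(ℙ.restrict S),
      (∑' i : I, ENNReal.ofReal (Real.exp (-θ * (R ω - (W i (T ω).toNNReal ω : ℝ))))) ≤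
        ENNReal.ofReal (Real.exp (-θ * m)) * Filter.liminf (fun n => F n ω) Filter.atTop := by
    filter_upwards [ae_restrict_mem hSmeas, ae_restrict_of_ae hR] with ω hωS hωR
    have hfin : T ω < ⊤ := hωS
    have hRω := hωR hfin
    have htnn : (0:ℝ) ≤ (T ω).toReal := ENNReal.toReal_nonneg
    have hterm : ∀ i : I, ENNReal.ofReal (Real.exp (-θ * (R ω - (W i (T ω).toNNReal ω : ℝ)))) ≤
        ENNReal.ofReal (Real.exp (-θ * m)) *
          ENNReal.ofReal (Real.exp (θ * (W i (T ω).toNNReal ω : ℝ) - c * (T ω).toReal)) := by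
      intro i
      rw [← ENNReal.ofReal_mul (Real.exp_pos _).le, ← Real.exp_add]
      apply ENNReal.ofReal_le_ofReal
      apply Real.exp_le_exp.mpr
      have h1 := mul_le_mul_of_nonneg_left hRω hθ.le
      have h2 := mul_le_mul_of_nonneg_right hθα htnn
      simp only [hcdef]
      nlinarith
    calc (∑' i : I, ENNReal.ofReal (Real.exp (-θ * (R ω - (W i (T ω).toNNReal ω : ℝ)))))
        ≤ ∑' i : I, ENNReal.ofReal (Real.exp (-θ * m)) *
            ENNReal.ofReal (Real.exp (θ * (W i (T ω).toNNReal ω : ℝ) - c * (T ω).toReal)) :=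
          ENNReal.tsum_le_tsum hterm
      _ = ENNReal.ofReal (Real.exp (-θ * m)) *
            ∑' i : I, ENNReal.ofReal
              (Real.exp (θ * (W i (T ω).toNNReal ω : ℝ) - c * (T ω).toReal)) :=
          ENNReal.tsum_mul_left
      _ ≤ ENNReal.ofReal (Real.exp (-θ * m)) * Filter.liminf (fun n => F n ω) Filter.atTop := by
          apply mul_le_mul_right
          have hconv : ∀ i : I, Filter.Tendsto (fun n => ENNReal.ofReal (gApprox θ c (W i) T n ω))
              Filter.atTop (𝓝 (ENNReal.ofReal
                (Real.exp (θ * (W i (T ω).toNNReal ω : ℝ) - c * (T ω).toReal)))) := fun i =>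
            (ENNReal.continuous_ofReal.continuousAt.tendsto).comp
              (gApprox_tendsto (hrc i ω) hfin)
          have heq : ∀ i : I, ENNReal.ofReal
              (Real.exp (θ * (W i (T ω).toNNReal ω : ℝ) - c * (T ω).toReal)) =
              Filter.liminf (fun n => ENNReal.ofReal (gApprox θ c (W i) T n ω)) Filter.atTop :=
            fun i => ((hconv i).liminf_eq).symm
          calc (∑' i : I, ENNReal.ofReal
                (Real.exp (θ * (W i (T ω).toNNReal ω : ℝ) - c * (T ω).toReal)))
              = ∑' i : I, Filter.liminf
                  (fun n => ENNReal.ofReal (gApprox θ c (W i) T n ω)) Filter.atTop :=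
                tsum_congr heq
            _ ≤ Filter.liminf (fun n => F n ω) Filter.atTop :=
                aux_tsum_liminf _
  -- integral bound
  have hFn_int : ∀ n, ∫⁻ ω, F n ω ∂ℙ ≤
      ENNReal.ofReal (∑' i : I, Real.exp (θ * (x i : ℝ))) := by
    intro n
    calc ∫⁻ ω, F n ω ∂ℙ
        = ∑' i : I, ∫⁻ ω, ENNReal.ofReal (gApprox θ c (W i) T n ω) ∂ℙ :=
          lintegral_tsum fun i =>
            ((gApprox_measurable (hadapt i) hT n).ennreal_ofReal).aemeasurable
      _ ≤ ∑' i : I, ENNReal.ofReal (Real.exp (θ * (x i : ℝ))) :=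
          ENNReal.tsum_le_tsum fun i => gApprox_lintegral_le (hM i) (h0 i) hT n
      _ = ENNReal.ofReal (∑' i : I, Real.exp (θ * (x i : ℝ))) :=
          (ENNReal.ofReal_tsum_of_nonneg (fun i => (Real.exp_pos _).le) hφ).symm
  calc ∫⁻ ω in S, (∑' i : I,
        ENNReal.ofReal (Real.exp (-θ * (R ω - (W i (T ω).toNNReal ω : ℝ))))) ∂ℙ
      ≤ ∫⁻ ω in S, ENNReal.ofReal (Real.exp (-θ * m)) *
          Filter.liminf (fun n => F n ω) Filter.atTop ∂ℙ := lintegral_mono_ae key_ae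
    _ = ENNReal.ofReal (Real.exp (-θ * m)) *
          ∫⁻ ω in S, Filter.liminf (fun n => F n ω) Filter.atTop ∂ℙ :=
        lintegral_const_mul' _ _ ENNReal.ofReal_ne_top
    _ ≤ ENNReal.ofReal (Real.exp (-θ * m)) *
          ∫⁻ ω, Filter.liminf (fun n => F n ω) Filter.atTop ∂ℙ := by
        gcongr
        exact Measure.restrict_le_self
    _ ≤ ENNReal.ofReal (Real.exp (-θ * m)) *
          Filter.liminf (fun n => ∫⁻ ω, F n ω ∂ℙ) Filter.atTop := by
        gcongr
        exact lintegral_liminf_le hFmeas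
    _ ≤ ENNReal.ofReal (Real.exp (-θ * m)) *
          ENNReal.ofReal (∑' i : I, Real.exp (θ * (x i : ℝ))) := by
        gcongr
        exact liminf_le_of_frequently_le (Filter.Frequently.of_forall hFn_int)
    _ = ENNReal.ofReal
          (Real.exp (-θ * m) * ∑' i : I, Real.exp (θ * (x i : ℝ))) :=
        (ENNReal.ofReal_mul (Real.exp_pos _).le).symm
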